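/- Let b₂,…,b_{2n} : S → ℂ be continuous functions on a compact set S such that the 1-form β = dw + (Σ_{j=2}^{2n} b_j(p) ζ_j) dz + (higher order in ζ) restricted to the zero section ζ = 0 satisfies β = dw there, and suppose β ∧ (dβ)ⁿ ≠ 0 at every point (p,0). If at some point p₀ ∈ S all b_j(p₀) = 0 and the remaining terms of dβ at (p₀,0) contain no dz component, then β ∧ (dβ)ⁿ vanishes at (p₀,0) — a contradiction; hence b₂,…,b_{2n} have no common zero on S. -/
import Mathlib


set_option synthInstance.maxHeartbeats 1000000
set_option maxHeartbeats 1000000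

open ExteriorAlgebra in
lemma pow_map_ι_eq_bot {V : Type*} [AddCommGroup V] [Module ℂ V]
    (U : Submodule ℂ V) [FiniteDimensional ℂ U] (k : ℕ)
    (hk : Module.finrank ℂ U < k) :
    (Submodule.map (ExteriorAlgebra.ι ℂ) U) ^ k = ⊥ := by
  rw [eq_bot_iff, Submodule.pow_eq_span_pow_set, Submodule.span_le]
  rintro x hx
  obtain ⟨f, rfl⟩ := Set.mem_pow.mp hx
  have h : ∀ i, ∃ u : U, ExteriorAlgebra.ι ℂ (u : V) = (f i : ExteriorAlgebra ℂ V) := by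
    intro i
    obtain ⟨u, hu, hu2⟩ := (f i).2
    exact ⟨⟨u, hu⟩, hu2⟩
  choose u hu using h
  have : (List.ofFn fun i => (f i : ExteriorAlgebra ℂ V)).prod
      = ιMulti ℂ k (fun i => ((u i : V))) := by
    rw [ιMulti_apply]
    simp only [← hu]
  rw [SetLike.mem_coe, this]
  have hdep : ¬ LinearIndependent ℂ (fun i : Fin k => ((u i : V))) := by
    intro hli
    have hli' : LinearIndependent ℂ u := hli.of_comp U.subtype
    have := hli'.fintype_card_le_finrank
    simp [Fintype.card_fin] at this
    omega
  rw [AlternatingMap.map_linearDependent _ _ hdep]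
  exact Submodule.zero_mem ⊥


/-- Work at points `(p,0)` of the zero section of `S × ℂ^{2n}`, and
represent covectors on the `(2n+1)`-dimensional tangent space by vectors in
`W = Fin (2n+1) → ℂ`, where the coordinate `0` is the `dz`-coefficient and coordinate `1`
the `dw`-coefficient.  Covectors with no `dz`-component form the hyperplane
`U = ker(proj 0)` (of dimension `2n`).  Suppose along `ζ = 0` the 1-form `β` equals `dw`
(i.e. `β p = ι(single 1 1)`), the contact condition `β ∧ (dβ)^n ≠ 0` holds, and at any
common zero `p` of the coefficient functions `b_j` of the `dz`-part, the 2-form `dβ` at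
`(p,0)` has no `dz`-component, i.e. lies in the degree-two part `(ι U)·(ι U)` of the
exterior algebra of `U`.  Then (since `β ∧ (dβ)^n` would be a `(2n+1)`-form built from the
`2n`-dimensional space `U`, hence zero, contradicting the contact condition) the functions
`b_j` have no common zero on `S`. -/
theorem no_common_zero_of_contact_condition
    (n : ℕ) (hn : 0 < n) (S : Set ℂ)
    (b : Fin (2 * n - 1) → ℂ → ℂ)
    (β dβ : ℂ → ExteriorAlgebra ℂ (Fin (2 * n + 1) → ℂ))
    (hβ : ∀ p ∈ S, β p =
      ExteriorAlgebra.ι ℂ (Pi.single (⟨1, by omega⟩ : Fin (2 * n + 1)) 1))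
    (hdz : ∀ p ∈ S, (∀ j, b j p = 0) →
      dβ p ∈ (Submodule.map (ExteriorAlgebra.ι ℂ)
          (LinearMap.ker
            (LinearMap.proj (⟨0, by omega⟩ : Fin (2 * n + 1)) :
              (Fin (2 * n + 1) → ℂ) →ₗ[ℂ] ℂ))) ^ 2)
    (hcontact : ∀ p ∈ S, β p * (dβ p) ^ n ≠ 0) :
    ∀ p ∈ S, ∃ j, b j p ≠ 0 := by
  intro p hp
  by_contra h
  push_neg at h
  set U : Submodule ℂ (Fin (2 * n + 1) → ℂ) :=
    LinearMap.ker (LinearMap.proj (⟨0, by omega⟩ : Fin (2 * n + 1)) :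
      (Fin (2 * n + 1) → ℂ) →ₗ[ℂ] ℂ) with hU
  set P := Submodule.map (ExteriorAlgebra.ι ℂ) U with hP
  have hdβ : dβ p ∈ P ^ 2 := hdz p hp h
  have hβmem : β p ∈ P := by
    rw [hβ p hp]
    refine Submodule.mem_map_of_mem ?_
    rw [hU, LinearMap.mem_ker, LinearMap.proj_apply]
    rw [Pi.single_apply]
    simp [Fin.ext_iff]
  have hmem : β p * (dβ p) ^ n ∈ P ^ (2 * n + 1) := by
    have h1 : (dβ p) ^ n ∈ (P ^ 2) ^ n := Submodule.pow_mem_pow _ hdβ n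
    rw [← pow_mul] at h1
    have h2 : P ^ (2 * n + 1) = P * P ^ (2 * n) := pow_succ' P (2 * n)
    rw [h2]
    exact Submodule.mul_mem_mul hβmem h1
  have hrank : Module.finrank ℂ U = 2 * n := by
    have hsurj : Function.Surjective
        (LinearMap.proj (⟨0, by omega⟩ : Fin (2 * n + 1)) :
          (Fin (2 * n + 1) → ℂ) →ₗ[ℂ] ℂ) := fun c =>
      ⟨Pi.single (⟨0, by omega⟩ : Fin (2 * n + 1)) c, by simp [LinearMap.proj_apply]⟩
    have := LinearMap.finrank_range_add_finrank_ker
      (LinearMap.proj (⟨0, by omega⟩ : Fin (2 * n + 1)) :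
        (Fin (2 * n + 1) → ℂ) →ₗ[ℂ] ℂ)
    rw [LinearMap.range_eq_top.mpr hsurj, finrank_top] at this
    simp only [Module.finrank_self, Module.finrank_pi, Fintype.card_fin] at this
    rw [hU]
    omega
  have hzero : P ^ (2 * n + 1) = ⊥ :=
    pow_map_ι_eq_bot U (2 * n + 1) (by omega)
  rw [hzero, Submodule.mem_bot] at hmem
  exact hcontact p hp hmem
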